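/- With the g-prior on β_γ and Bernoulli(w) prior on γ, the maximum a posteriori model argmax_γ p(γ|y,g,w) coincides with argmax_γ ( ss_γ/σ² − F(g,w)|γ| ), where F(g,w) = ((1+g)/g)(2 log((1−w)/w) + log(1+g)). -/

import Mathlib

open Matrix Real

/-- With the g-prior on `β_γ` and a Bernoulli(w) prior on `γ`, the log unnormalized
posterior `log((1+g)^{−|γ|/2} exp((g/(1+g)) ss_γ/(2σ²)) w^{|γ|}(1−w)^{p−|γ|})` is a strictly
increasing affine function (with slope `g/(2(1+g))`) of `ss_γ/σ² − F(g,w)|γ|`, where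
`F(g,w) = ((1+g)/g)(2 log((1−w)/w) + log(1+g))`; consequently the MAP model coincides with
the maximizer of the penalized criterion `ss_γ/σ² − F(g,w)|γ|`. -/
theorem map_model_equals_penalized_criterion {p : ℕ}
    (ss : Finset (Fin p) → ℝ) (g w σ2 : ℝ)
    (hg : 0 < g) (hw0 : 0 < w) (hw1 : w < 1) (hσ : 0 < σ2)
    (post score : Finset (Fin p) → ℝ) (F : ℝ)
    (hpost : ∀ γ, post γ = (1 + g) ^ (-(γ.card : ℝ) / 2) *
        Real.exp (g / (1 + g) * ss γ / (2 * σ2)) * w ^ γ.card * (1 - w) ^ (p - γ.card))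
    (hF : F = (1 + g) / g * (2 * Real.log ((1 - w) / w) + Real.log (1 + g)))
    (hscore : ∀ γ, score γ = ss γ / σ2 - F * γ.card) :
    (∃ C : ℝ, ∀ γ, Real.log (post γ) = g / (2 * (1 + g)) * score γ + C) ∧
    (∀ γ γ' : Finset (Fin p), post γ ≤ post γ' ↔ score γ ≤ score γ') := by
  have h1g : (0:ℝ) < 1 + g := by linarith
  have hw1' : (0:ℝ) < 1 - w := by linarith
  have hpos : ∀ γ : Finset (Fin p), 0 < post γ := by
    intro γ; rw [hpost]; positivity
  have key : ∀ γ, Real.log (post γ) = g / (2 * (1 + g)) * score γ + p * Real.log (1 - w) := by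
    intro γ
    have hcard : (γ.card : ℝ) ≤ p := by
      exact_mod_cast (Finset.card_le_univ γ).trans_eq (by simp)
    have hsub : ((p - γ.card : ℕ) : ℝ) = (p : ℝ) - γ.card := by
      have : γ.card ≤ p := by exact_mod_cast hcard
      push_cast [Nat.cast_sub this]; ring
    rw [hpost, hscore, hF,
        Real.log_mul (by positivity) (by positivity),
        Real.log_mul (by positivity) (by positivity),
        Real.log_mul (by positivity) (by positivity),
        Real.log_rpow h1g, Real.log_exp, Real.log_pow, Real.log_pow,
        Real.log_div (ne_of_gt hw1') (ne_of_gt hw0), hsub]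
    field_simp
    ring
  refine ⟨⟨p * Real.log (1 - w), key⟩, ?_⟩
  intro γ γ'
  rw [← Real.log_le_log_iff (hpos γ) (hpos γ'), key γ, key γ',
      add_le_add_iff_right, mul_le_mul_iff_right₀ (by positivity)]
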